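/- Let 0 ≤ a < b, let s ∈ (0,1], let p > 1 and q = p/(p−1), and let f : ℝ → ℝ be differentiable on an open interval containing [a, b] with f' integrable on [a, b]. Suppose |f'|^q is s-convex in the second sense on [a, b], i.e. for all x, y ∈ [a, b] and t ∈ [0,1], |f'(t·x + (1−t)·y)|^q ≤ t^s |f'(x)|^q + (1−t)^s |f'(y)|^q. Let D = {a = x₀ < x₁ < … < x_n = b} be any partition of [a, b], let S(f,D) = Σ_{k=0}^{n−1} ((f(x_k)+f(x_{k+1}))/2)(x_{k+1} − x_k) be the trapezoidal sum, and R(f,D) = ∫_a^b f(x) dx − S(f,D) the error. Then |R(f,D)| ≤ (1/2^{1/p}) · ( (s·2^s + 1) / (2^s (s+1)(s+2)) )^{1/q} · Σ_{k=0}^{n−1} ((x_{k+1} − x_k)²/2) ( |f'(x_k)| + |f'(x_{k+1})| ). -/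

import Mathlib

open MeasureTheory intervalIntegral

lemma rpow_s_add_one {x : ℝ} (hx : 0 ≤ x) {s : ℝ} (hs : s + 1 ≠ 0) :
    x ^ (s + 1) = x ^ s * x := by
  rw [Real.rpow_add' hx hs, Real.rpow_one]

lemma trap_weight_integral (u v : ℝ) (huv : u < v) :
    ∫ t in u..v, |(u + v) / 2 - t| = (v - u) ^ 2 / 4 := by
  set m := (u + v) / 2 with hm
  have hum : u ≤ m := by rw [hm]; linarith
  have hmv : m ≤ v := by rw [hm]; linarith
  have hcont : Continuous fun t : ℝ => |m - t| := by continuity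
  have hsplit : (∫ t in u..m, |m - t|) + (∫ t in m..v, |m - t|) = ∫ t in u..v, |m - t| :=
    integral_add_adjacent_intervals (hcont.intervalIntegrable _ _) (hcont.intervalIntegrable _ _)
  have h1 : (∫ t in u..m, |m - t|) = ∫ t in u..m, m - t := by
    apply integral_congr
    intro t ht
    rw [Set.uIcc_of_le hum] at ht
    exact abs_of_nonneg (by linarith [ht.2])
  have h2 : (∫ t in m..v, |m - t|) = ∫ t in m..v, t - m := by
    apply integral_congr
    intro t ht
    rw [Set.uIcc_of_le hmv] at ht
    show |m - t| = t - m
    rw [abs_sub_comm]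
    exact abs_of_nonneg (by linarith [ht.1])
  have e1 : (∫ t in u..m, m - t) = (m - u) ^ 2 / 2 := by
    have : ∀ t ∈ Set.uIcc u m, HasDerivAt (fun t : ℝ => -((m - t) ^ 2 / 2)) (m - t) t := by
      intro t _
      have : HasDerivAt (fun t : ℝ => m - t) (-1) t := by
        simpa using (hasDerivAt_id t).const_sub m
      have := ((this.pow 2).div_const 2).neg
      refine this.congr_deriv ?_
      ring
    rw [integral_eq_sub_of_hasDerivAt this
      ((continuous_const.sub continuous_id).intervalIntegrable _ _)]
    ring
  have e2 : (∫ t in m..v, t - m) = (v - m) ^ 2 / 2 := by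
    have : ∀ t ∈ Set.uIcc m v, HasDerivAt (fun t : ℝ => (t - m) ^ 2 / 2) (t - m) t := by
      intro t _
      have : HasDerivAt (fun t : ℝ => t - m) (1) t := by
        simpa using (hasDerivAt_id t).sub_const m
      have := (this.pow 2).div_const 2
      refine this.congr_deriv ?_
      ring
    rw [integral_eq_sub_of_hasDerivAt this
      ((continuous_id.sub continuous_const).intervalIntegrable _ _)]
    simp
  rw [← hsplit, h1, h2, e1, e2]
  rw [hm]; ring

lemma trap_J1 (u v s : ℝ) (huv : u < v) (hs : 0 < s) :
    ∫ t in u..v, |(u + v) / 2 - t| * ((v - t) / (v - u)) ^ s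
      = (v - u) ^ 2 * ((s * 2 ^ s + 1) / (2 ^ (s + 1) * (s + 1) * (s + 2))) := by
  set h := v - u with hh
  have hh0 : 0 < h := by rw [hh]; linarith
  set m := (u + v) / 2 with hm
  have hum : u ≤ m := by rw [hm]; linarith
  have hmv : m ≤ v := by rw [hm]; linarith
  have hs1 : s + 1 ≠ 0 := by linarith
  have hs2 : s + 2 ≠ 0 := by linarith
  have hcontb : Continuous fun t : ℝ => ((v - t) / h) ^ s := by
    apply Continuous.rpow_const (by continuity)
    exact fun t => Or.inr hs.le
  have hcont : Continuous fun t : ℝ => |m - t| * ((v - t) / h) ^ s := by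
    exact (continuous_abs.comp (by continuity)).mul hcontb
  have hsplit : (∫ t in u..m, |m - t| * ((v - t) / h) ^ s)
      + (∫ t in m..v, |m - t| * ((v - t) / h) ^ s)
      = ∫ t in u..v, |m - t| * ((v - t) / h) ^ s :=
    integral_add_adjacent_intervals (hcont.intervalIntegrable _ _) (hcont.intervalIntegrable _ _)
  -- derivative of base
  have hb : ∀ t : ℝ, HasDerivAt (fun t : ℝ => (v - t) / h) (-1 / h) t := by
    intro t
    simpa using ((hasDerivAt_id t).const_sub v).div_const h
  -- piece 1
  have key1 : ∀ t ∈ Set.uIcc u m, HasDerivAt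
      (fun t : ℝ => h ^ 2 / (2 * (s + 1)) * ((v - t) / h) ^ (s + 1)
        - h ^ 2 / (s + 2) * ((v - t) / h) ^ (s + 2))
      (|m - t| * ((v - t) / h) ^ s) t := by
    intro t ht
    rw [Set.uIcc_of_le hum] at ht
    have hbt : 0 ≤ (v - t) / h := by
      apply div_nonneg _ hh0.le
      linarith [ht.2]
    have habs : |m - t| = m - t := abs_of_nonneg (by linarith [ht.2])
    have h1 := ((hb t).rpow_const (Or.inr (by linarith : (1:ℝ) ≤ s + 1))).const_mul
      (h ^ 2 / (2 * (s + 1)))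
    have h2 := ((hb t).rpow_const (Or.inr (by linarith : (1:ℝ) ≤ s + 2))).const_mul
      (h ^ 2 / (s + 2))
    have hd := h1.sub h2
    refine hd.congr_deriv ?_
    have e1 : s + 1 - 1 = s := by ring
    have e2 : s + 2 - 1 = s + 1 := by ring
    rw [e1, e2, rpow_s_add_one hbt hs1, habs]
    have hmt : m - t = (v - t) - h / 2 := by rw [hm, hh]; ring
    rw [hmt]
    field_simp
    ring
  have key2 : ∀ t ∈ Set.uIcc m v, HasDerivAt
      (fun t : ℝ => h ^ 2 / (s + 2) * ((v - t) / h) ^ (s + 2)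
        - h ^ 2 / (2 * (s + 1)) * ((v - t) / h) ^ (s + 1))
      (|m - t| * ((v - t) / h) ^ s) t := by
    intro t ht
    rw [Set.uIcc_of_le hmv] at ht
    have hbt : 0 ≤ (v - t) / h := by
      apply div_nonneg _ hh0.le
      linarith [ht.2]
    have habs : |m - t| = t - m := by
      rw [abs_sub_comm]
      exact abs_of_nonneg (by linarith [ht.1])
    have h1 := ((hb t).rpow_const (Or.inr (by linarith : (1:ℝ) ≤ s + 2))).const_mul
      (h ^ 2 / (s + 2))
    have h2 := ((hb t).rpow_const (Or.inr (by linarith : (1:ℝ) ≤ s + 1))).const_mul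
      (h ^ 2 / (2 * (s + 1)))
    have hd := h1.sub h2
    refine hd.congr_deriv ?_
    have e1 : s + 1 - 1 = s := by ring
    have e2 : s + 2 - 1 = s + 1 := by ring
    rw [e1, e2, rpow_s_add_one hbt hs1, habs]
    have hmt : t - m = h / 2 - (v - t) := by rw [hm, hh]; ring
    rw [hmt]
    field_simp
    ring
  have p1 : (∫ t in u..m, |m - t| * ((v - t) / h) ^ s)
      = (h ^ 2 / (2 * (s + 1)) * ((1:ℝ)/2) ^ (s + 1) - h ^ 2 / (s + 2) * ((1:ℝ)/2) ^ (s + 2))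
        - (h ^ 2 / (2 * (s + 1)) - h ^ 2 / (s + 2)) := by
    rw [integral_eq_sub_of_hasDerivAt key1 (hcont.intervalIntegrable _ _)]
    have hvm : (v - m) / h = 1 / 2 := by
      rw [hm, hh]; field_simp [(show v - u ≠ 0 by linarith)]; ring
    have hvu : (v - u) / h = 1 := by
      rw [hh]; field_simp [(show v - u ≠ 0 by linarith)]
    rw [hvm, hvu, Real.one_rpow, Real.one_rpow]
    ring
  have p2 : (∫ t in m..v, |m - t| * ((v - t) / h) ^ s)
      = - (h ^ 2 / (s + 2) * ((1:ℝ)/2) ^ (s + 2) - h ^ 2 / (2 * (s + 1)) * ((1:ℝ)/2) ^ (s + 1)) := by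
    rw [integral_eq_sub_of_hasDerivAt key2 (hcont.intervalIntegrable _ _)]
    have hvv : (v - v) / h = 0 := by simp
    have hvm : (v - m) / h = 1 / 2 := by
      rw [hm, hh]; field_simp [(show v - u ≠ 0 by linarith)]; ring
    rw [hvv, hvm, Real.zero_rpow hs2, Real.zero_rpow (by linarith : s + 1 ≠ 0)]
    ring
  rw [← hsplit, p1, p2]
  -- algebra with y = (1/2)^s, z = 2^s, y = 1/z
  have hz0 : (0:ℝ) < (2:ℝ) ^ s := Real.rpow_pos_of_pos (by norm_num) s
  have hyz : ((1:ℝ)/2) ^ s * (2:ℝ) ^ s = 1 := by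
    rw [← Real.mul_rpow (by norm_num) (by norm_num)]
    norm_num
  have hy : ((1:ℝ)/2) ^ s = 1 / (2:ℝ) ^ s := eq_one_div_of_mul_eq_one_left hyz
  have h2s1 : (2:ℝ) ^ (s + 1) = 2 ^ s * 2 := rpow_s_add_one (by norm_num) hs1
  rw [rpow_s_add_one (by norm_num : (0:ℝ) ≤ 1/2) hs1,
    show s + 2 = (s + 1) + 1 by ring,
    rpow_s_add_one (by norm_num : (0:ℝ) ≤ 1/2) (by linarith),
    rpow_s_add_one (by norm_num : (0:ℝ) ≤ 1/2) hs1, hy, h2s1]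
  field_simp
  ring

lemma trap_J2 (u v s : ℝ) (huv : u < v) (hs : 0 < s) :
    ∫ t in u..v, |(u + v) / 2 - t| * ((t - u) / (v - u)) ^ s
      = (v - u) ^ 2 * ((s * 2 ^ s + 1) / (2 ^ (s + 1) * (s + 1) * (s + 2))) := by
  have key := intervalIntegral.integral_comp_sub_left
      (a := u) (b := v) (fun r => |(u + v) / 2 - r| * ((v - r) / (v - u)) ^ s) (u + v)
  have e1 : u + v - u = v := by ring
  have e2 : u + v - v = u := by ring
  rw [e1, e2] at key
  have congr1 : (∫ t in u..v, |(u + v) / 2 - t| * ((t - u) / (v - u)) ^ s)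
      = ∫ t in u..v, (fun r => |(u + v) / 2 - r| * ((v - r) / (v - u)) ^ s) (u + v - t) := by
    apply integral_congr
    intro t _
    simp only
    have e3 : (u + v) / 2 - (u + v - t) = t - (u + v) / 2 := by ring
    have e4 : v - (u + v - t) = t - u := by ring
    rw [e3, e4, ← abs_sub_comm ((u+v)/2) t]
  rw [congr1, key, trap_J1 u v s huv hs]

lemma add_rpow_le_rpow_add {A B q : ℝ} (hA : 0 ≤ A) (hB : 0 ≤ B) (hq : 1 ≤ q) :
    (A ^ q + B ^ q) ^ (1 / q) ≤ A + B := by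
  have h := NNReal.rpow_add_rpow_le_add A.toNNReal B.toNNReal hq
  have := NNReal.coe_le_coe.mpr h
  push_cast at this
  rwa [Real.coe_toNNReal A hA, Real.coe_toNNReal B hB] at this

lemma two_rpow_arith {p q : ℝ} (hpq : Real.HolderConjugate p q) :
    ((1:ℝ)/4) ^ (1/p) * ((1:ℝ)/2) ^ (1/q) = (1 / (2:ℝ) ^ (1/p)) * (1/2) := by
  have h2 : (0:ℝ) < 2 := by norm_num
  have h4 : ((1:ℝ)/4) = (2:ℝ) ^ (-2:ℝ) := by
    rw [show (-2:ℝ) = ((-2:ℤ):ℝ) by norm_num, Real.rpow_intCast]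
    norm_num
  have h12 : ((1:ℝ)/2) = (2:ℝ) ^ (-1:ℝ) := by
    rw [show (-1:ℝ) = ((-1:ℤ):ℝ) by norm_num, Real.rpow_intCast]
    norm_num
  have hinv : (1 / (2:ℝ) ^ (1/p)) = (2:ℝ) ^ (-(1/p)) := by
    rw [Real.rpow_neg h2.le, one_div]
  have hpq1 : 1/p + 1/q = 1 := by
    have := hpq.inv_add_inv_eq_one
    rw [one_div, one_div]
    linarith
  rw [h4, h12, hinv, ← Real.rpow_mul h2.le, ← Real.rpow_mul h2.le,
    ← Real.rpow_add h2, ← Real.rpow_add h2]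
  congr 1
  linarith

lemma trap_const_eq {s p q h : ℝ} (hs : 0 < s) (hpq : Real.HolderConjugate p q) (hh0 : 0 < h) :
    (h^2/4) ^ (1/p) * (h^2 * ((s * 2^s + 1)/(2^(s+1) * (s+1) * (s+2)))) ^ (1/q)
      = (1 / 2 ^ (1/p)) * ((s * 2^s + 1)/(2^s * (s+1) * (s+2))) ^ (1/q) * (h^2/2) := by
  have h2 : (0:ℝ) < 2 := by norm_num
  have hs2 : (0:ℝ) < (2:ℝ)^s := Real.rpow_pos_of_pos h2 s
  have hN : (0:ℝ) < s * 2^s + 1 := by nlinarith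
  have hs1 : (0:ℝ) < s + 1 := by linarith
  have hs2' : (0:ℝ) < s + 2 := by linarith
  have hD : (0:ℝ) < (2:ℝ)^s * (s+1) * (s+2) := by positivity
  have h2s1 : (2:ℝ)^(s+1) = 2^s * 2 := by rw [Real.rpow_add h2, Real.rpow_one]
  have hpq1 : 1/p + 1/q = 1 := by
    have := hpq.inv_add_inv_eq_one
    rw [one_div, one_div]
    linarith
  have hI : (s * 2^s + 1)/((2:ℝ)^(s+1) * (s+1) * (s+2))
      = ((s * 2^s + 1)/(2^s * (s+1) * (s+2))) * (1/2) := by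
    rw [h2s1]
    rw [show (2:ℝ)^s * 2 * (s+1) * (s+2) = (2^s * (s+1) * (s+2)) * 2 by ring,
      ← div_div]
    ring
  rw [hI]
  have e1 : h^2/4 = h^2 * (1/4) := by ring
  rw [e1, Real.mul_rpow (by positivity) (by norm_num),
    Real.mul_rpow (by positivity) (by positivity),
    Real.mul_rpow (by positivity) (by norm_num)]
  have hh2 : (h^2:ℝ)^(1/p) * (h^2)^(1/q) = h^2 := by
    rw [← Real.rpow_add (by positivity), hpq1, Real.rpow_one]
  calc (h^2)^(1/p) * (1/4:ℝ)^(1/p) *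
        ((h^2)^(1/q) * (((s * 2^s + 1)/(2^s * (s+1) * (s+2)))^(1/q) * (1/2:ℝ)^(1/q)))
      = ((h^2)^(1/p) * (h^2)^(1/q)) * ((1/4:ℝ)^(1/p) * (1/2:ℝ)^(1/q)) *
          ((s * 2^s + 1)/(2^s * (s+1) * (s+2)))^(1/q) := by ring
    _ = h^2 * ((1 / (2:ℝ)^(1/p)) * (1/2)) *
          ((s * 2^s + 1)/(2^s * (s+1) * (s+2)))^(1/q) := by
        rw [hh2, two_rpow_arith hpq]
    _ = (1 / 2^(1/p)) * ((s * 2^s + 1)/(2^s * (s+1) * (s+2)))^(1/q) * (h^2/2) := by ring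

lemma trap_interval (f f' : ℝ → ℝ) (s p q u v : ℝ)
    (hs : 0 < s) (hpq : Real.HolderConjugate p q)
    (huv : u < v)
    (hdiff : ∀ y ∈ Set.uIcc u v, HasDerivAt f (f' y) y)
    (hint : IntervalIntegrable f' volume u v)
    (hconv : ∀ t ∈ Set.Icc (0:ℝ) 1,
      |f' (t * v + (1 - t) * u)| ^ q ≤ t ^ s * |f' v| ^ q + (1 - t) ^ s * |f' u| ^ q) :
    |(∫ y in u..v, f y) - (f u + f v) / 2 * (v - u)| ≤
      (1 / 2 ^ (1 / p)) * ((s * 2 ^ s + 1) / (2 ^ s * (s + 1) * (s + 2))) ^ (1 / q) *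
        ((v - u) ^ 2 / 2 * (|f' u| + |f' v|)) := by
  have hq1 : 1 < q := hpq.symm.lt
  have hp0 : 0 < p := hpq.pos
  have hq0 : 0 < q := hpq.symm.pos
  have hpq1 : 1/p + 1/q = 1 := by
    have := hpq.inv_add_inv_eq_one
    rw [one_div, one_div]; linarith
  have hh0 : 0 < v - u := by linarith
  set h := v - u with hh
  set m := (u + v) / 2 with hm
  set A := |f' u| with hA
  set B := |f' v| with hB
  have hA0 : 0 ≤ A := abs_nonneg _
  have hB0 : 0 ≤ B := abs_nonneg _
  -- pointwise s-convexity bound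
  have hptw : ∀ t ∈ Set.Icc u v,
      |f' t| ^ q ≤ ((t - u)/h) ^ s * B ^ q + ((v - t)/h) ^ s * A ^ q := by
    intro t ht
    have hmem : (t - u)/h ∈ Set.Icc (0:ℝ) 1 := by
      constructor
      · exact div_nonneg (by linarith [ht.1]) hh0.le
      · rw [div_le_one hh0, hh]; linarith [ht.2]
    have hco : 1 - (t - u)/h = (v - t)/h := by
      rw [hh]; field_simp [(show v - u ≠ 0 by linarith)]; ring
    have harg : (t - u)/h * v + (1 - (t - u)/h) * u = t := by
      rw [hco, hh]; field_simp [(show v - u ≠ 0 by linarith)]; ring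
    have := hconv _ hmem
    rw [harg, hco] at this
    exact this
  -- uniform bounds
  have hbq : ∀ t ∈ Set.Icc u v, |f' t| ^ q ≤ A ^ q + B ^ q := by
    intro t ht
    have l1 : ((t - u)/h) ^ s ≤ 1 :=
      Real.rpow_le_one (div_nonneg (by linarith [ht.1]) hh0.le)
        (by rw [div_le_one hh0, hh]; linarith [ht.2]) hs.le
    have l2 : ((v - t)/h) ^ s ≤ 1 :=
      Real.rpow_le_one (div_nonneg (by linarith [ht.2]) hh0.le)
        (by rw [div_le_one hh0, hh]; linarith [ht.1]) hs.le
    have hAq : (0:ℝ) ≤ A ^ q := Real.rpow_nonneg hA0 q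
    have hBq : (0:ℝ) ≤ B ^ q := Real.rpow_nonneg hB0 q
    calc |f' t| ^ q ≤ ((t - u)/h) ^ s * B ^ q + ((v - t)/h) ^ s * A ^ q := hptw t ht
      _ ≤ 1 * B ^ q + 1 * A ^ q := by
          exact add_le_add (mul_le_mul_of_nonneg_right l1 hBq)
            (mul_le_mul_of_nonneg_right l2 hAq)
      _ = A ^ q + B ^ q := by ring
  have hbound : ∀ t ∈ Set.Icc u v, |f' t| ≤ (A ^ q + B ^ q) ^ (1/q) := by
    intro t ht
    have key : |f' t| = (|f' t| ^ q) ^ (1/q) := by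
      rw [← Real.rpow_mul (abs_nonneg _), mul_one_div_cancel hq0.ne', Real.rpow_one]
    rw [key]
    exact Real.rpow_le_rpow (Real.rpow_nonneg (abs_nonneg _) q) (hbq t ht) (by positivity)
  -- integration by parts
  have hfc : ContinuousOn f (Set.uIcc u v) := fun t ht =>
    (hdiff t ht).continuousAt.continuousWithinAt
  have hparts := intervalIntegral.integral_mul_deriv_eq_deriv_mul
    (u := fun t => t - m) (u' := fun _ => (1:ℝ)) (v := f) (v' := f')
    (fun t _ => by simpa using (hasDerivAt_id t).sub_const m)
    hdiff intervalIntegrable_const hint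
  simp only [one_mul] at hparts
  have herr : (∫ y in u..v, f y) - (f u + f v)/2 * (v - u) = ∫ t in u..v, (m - t) * f' t := by
    have hneg : (∫ t in u..v, (m - t) * f' t) = - ∫ t in u..v, (t - m) * f' t := by
      rw [← intervalIntegral.integral_neg]
      apply integral_congr
      intro t _
      simp only
      ring
    rw [hneg, hparts, hm]
    ring
  have step2 : |(∫ y in u..v, f y) - (f u + f v)/2 * (v - u)|
      ≤ ∫ t in u..v, |m - t| * |f' t| := by
    rw [herr]
    refine (intervalIntegral.abs_integral_le_integral_abs huv.le).trans_eq ?_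
    apply integral_congr
    intro t _
    simp only
    rw [abs_mul]
  -- Hölder setup
  set μ := volume.restrict (Set.Ioc u v) with hμ
  haveI : IsFiniteMeasure μ := by
    constructor
    rw [hμ, Measure.restrict_apply_univ, Real.volume_Ioc]
    exact ENNReal.ofReal_lt_top
  have hf'm : AEStronglyMeasurable f' μ := hint.1.aestronglyMeasurable
  have habs : AEStronglyMeasurable (fun t => |f' t|) μ := by
    simpa [Real.norm_eq_abs] using hf'm.norm
  have hwcont : Continuous (fun t : ℝ => |m - t|) := by continuity
  have hmem_ae : ∀ᵐ t ∂μ, t ∈ Set.Icc u v := by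
    rw [hμ, ae_restrict_iff' measurableSet_Ioc]
    filter_upwards with t ht using Set.Ioc_subset_Icc_self ht
  have hwle : ∀ t ∈ Set.Icc u v, |m - t| ≤ h/2 := by
    intro t ht
    rw [abs_le]
    constructor <;> rw [hm, hh] <;> linarith [ht.1, ht.2]
  set F := fun t : ℝ => |m - t| ^ (1/p) with hF
  set G := fun t : ℝ => |m - t| ^ (1/q) * |f' t| with hG
  have hFcont : Continuous F := hwcont.rpow_const (fun t => Or.inr (by positivity))
  have hGm : AEStronglyMeasurable G μ :=
    ((hwcont.rpow_const (fun t => Or.inr (by positivity))).aestronglyMeasurable).mul habs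
  have hFmem : MemLp F (ENNReal.ofReal p) μ := by
    apply MemLp.of_bound hFcont.aestronglyMeasurable ((h/2) ^ (1/p))
    filter_upwards [hmem_ae] with t ht
    rw [Real.norm_of_nonneg (Real.rpow_nonneg (abs_nonneg _) _)]
    exact Real.rpow_le_rpow (abs_nonneg _) (hwle t ht) (by positivity)
  have hGmem : MemLp G (ENNReal.ofReal q) μ := by
    apply MemLp.of_bound hGm ((h/2) ^ (1/q) * (A ^ q + B ^ q) ^ (1/q))
    filter_upwards [hmem_ae] with t ht
    rw [Real.norm_of_nonneg (mul_nonneg (Real.rpow_nonneg (abs_nonneg _) _) (abs_nonneg _))]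
    exact mul_le_mul (Real.rpow_le_rpow (abs_nonneg _) (hwle t ht) (by positivity))
      (hbound t ht) (abs_nonneg _) (by positivity)
  have hFG := integral_mul_le_Lp_mul_Lq_of_nonneg hpq
    (Filter.Eventually.of_forall fun t => by positivity)
    (Filter.Eventually.of_forall fun t => by positivity) hFmem hGmem
  -- identify integrals
  have idFG : (∫ t, F t * G t ∂μ) = ∫ t in u..v, |m - t| * |f' t| := by
    rw [intervalIntegral.integral_of_le huv.le, ← hμ]
    refine MeasureTheory.integral_congr_ae (Filter.Eventually.of_forall fun t => ?_)
    rw [hF, hG]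
    simp only
    rw [← mul_assoc, ← Real.rpow_add' (abs_nonneg _) (by rw [hpq1]; norm_num), hpq1,
      Real.rpow_one]
  have idF : (∫ t, F t ^ p ∂μ) = ∫ t in u..v, |m - t| := by
    rw [intervalIntegral.integral_of_le huv.le, ← hμ]
    refine MeasureTheory.integral_congr_ae (Filter.Eventually.of_forall fun t => ?_)
    rw [hF]
    simp only
    rw [← Real.rpow_mul (abs_nonneg _), one_div_mul_cancel hp0.ne', Real.rpow_one]
  have idG : (∫ t, G t ^ q ∂μ) = ∫ t in u..v, |m - t| * |f' t| ^ q := by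
    rw [intervalIntegral.integral_of_le huv.le, ← hμ]
    refine MeasureTheory.integral_congr_ae (Filter.Eventually.of_forall fun t => ?_)
    rw [hG]
    simp only
    rw [Real.mul_rpow (Real.rpow_nonneg (abs_nonneg _) _) (abs_nonneg _),
      ← Real.rpow_mul (abs_nonneg _), one_div_mul_cancel hq0.ne', Real.rpow_one]
  -- comparison of the weighted q-integral
  have hGint : Integrable (fun t => |m - t| * |f' t| ^ q) μ := by
    have hmeas1 : AEStronglyMeasurable (fun t : ℝ => |m - t| * |f' t| ^ q) μ := by
      apply AEStronglyMeasurable.mul hwcont.aestronglyMeasurable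
      exact aestronglyMeasurable_iff_aemeasurable.mpr
        ((aestronglyMeasurable_iff_aemeasurable.mp habs).pow_const q)
    apply memLp_one_iff_integrable.mp
    apply MemLp.of_bound hmeas1 ((h/2) * (A ^ q + B ^ q))
    filter_upwards [hmem_ae] with t ht
    rw [Real.norm_of_nonneg (mul_nonneg (abs_nonneg _) (Real.rpow_nonneg (abs_nonneg _) _))]
    exact mul_le_mul (hwle t ht) (hbq t ht) (Real.rpow_nonneg (abs_nonneg _) _)
      (by rw [hh]; linarith)
  have hψcont : Continuous (fun t : ℝ =>
      |m - t| * (((t - u)/h) ^ s * B ^ q + ((v - t)/h) ^ s * A ^ q)) := by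
    apply hwcont.mul
    apply Continuous.add
    · exact (Continuous.rpow_const ((continuous_id.sub continuous_const).div_const h)
        (fun t => Or.inr hs.le)).mul continuous_const
    · exact (Continuous.rpow_const ((continuous_const.sub continuous_id).div_const h)
        (fun t => Or.inr hs.le)).mul continuous_const
  have hψint : Integrable (fun t : ℝ =>
      |m - t| * (((t - u)/h) ^ s * B ^ q + ((v - t)/h) ^ s * A ^ q)) μ :=
    hψcont.integrableOn_Ioc
  have hTle : (∫ t in u..v, |m - t| * |f' t| ^ q)
      ≤ ∫ t in u..v, |m - t| * (((t - u)/h) ^ s * B ^ q + ((v - t)/h) ^ s * A ^ q) := by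
    rw [intervalIntegral.integral_of_le huv.le, intervalIntegral.integral_of_le huv.le, ← hμ]
    apply integral_mono_ae hGint hψint
    filter_upwards [hmem_ae] with t ht
    exact mul_le_mul_of_nonneg_left (hptw t ht) (abs_nonneg _)
  -- compute
  have hψval : (∫ t in u..v, |m - t| * (((t - u)/h) ^ s * B ^ q + ((v - t)/h) ^ s * A ^ q))
      = h^2 * ((s * 2^s + 1)/(2^(s+1) * (s+1) * (s+2))) * (A ^ q + B ^ q) := by
    have expand : ∀ t : ℝ, |m - t| * (((t - u)/h) ^ s * B ^ q + ((v - t)/h) ^ s * A ^ q)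
        = B ^ q * (|m - t| * ((t - u)/h) ^ s) + A ^ q * (|m - t| * ((v - t)/h) ^ s) :=
      fun t => by ring
    rw [integral_congr (g := fun t => B ^ q * (|m - t| * ((t - u)/h) ^ s)
        + A ^ q * (|m - t| * ((v - t)/h) ^ s)) (fun t _ => expand t)]
    have hi1 : IntervalIntegrable (fun t : ℝ => B ^ q * (|m - t| * ((t - u)/h) ^ s))
        volume u v := by
      apply Continuous.intervalIntegrable
      exact continuous_const.mul (hwcont.mul (Continuous.rpow_const
        (by fun_prop) (fun t => Or.inr hs.le)))
    have hi2 : IntervalIntegrable (fun t : ℝ => A ^ q * (|m - t| * ((v - t)/h) ^ s))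
        volume u v := by
      apply Continuous.intervalIntegrable
      exact continuous_const.mul (hwcont.mul (Continuous.rpow_const
        (by fun_prop) (fun t => Or.inr hs.le)))
    rw [intervalIntegral.integral_add hi1 hi2,
      intervalIntegral.integral_const_mul, intervalIntegral.integral_const_mul,
      hm, hh, trap_J1 u v s huv hs, trap_J2 u v s huv hs]
    ring
  -- assemble
  have hW : (∫ t in u..v, |m - t|) = h^2/4 := by
    rw [hm, hh]
    exact trap_weight_integral u v huv
  have hInonneg : (0:ℝ) ≤ ∫ t in u..v, |m - t| * |f' t| ^ q := by
    apply intervalIntegral.integral_nonneg huv.le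
    intro t _
    positivity
  calc |(∫ y in u..v, f y) - (f u + f v)/2 * (v - u)|
      ≤ ∫ t in u..v, |m - t| * |f' t| := step2
    _ = ∫ t, F t * G t ∂μ := idFG.symm
    _ ≤ (∫ t, F t ^ p ∂μ) ^ (1/p) * (∫ t, G t ^ q ∂μ) ^ (1/q) := hFG
    _ = (h^2/4) ^ (1/p) * (∫ t in u..v, |m - t| * |f' t| ^ q) ^ (1/q) := by
        rw [idF, idG, hW]
    _ ≤ (h^2/4) ^ (1/p)
        * (h^2 * ((s * 2^s + 1)/(2^(s+1) * (s+1) * (s+2))) * (A ^ q + B ^ q)) ^ (1/q) := by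
        apply mul_le_mul_of_nonneg_left _ (by positivity)
        exact Real.rpow_le_rpow hInonneg (hTle.trans_eq hψval) (by positivity)
    _ ≤ (h^2/4) ^ (1/p)
        * ((h^2 * ((s * 2^s + 1)/(2^(s+1) * (s+1) * (s+2)))) ^ (1/q) * (A + B)) := by
        apply mul_le_mul_of_nonneg_left _ (by positivity)
        have hc0 : (0:ℝ) ≤ h^2 * ((s * 2^s + 1)/(2^(s+1) * (s+1) * (s+2))) := by
          have h2s : (0:ℝ) < (2:ℝ)^s := Real.rpow_pos_of_pos (by norm_num) s
          have h2s1 : (0:ℝ) < (2:ℝ)^(s+1) := Real.rpow_pos_of_pos (by norm_num) (s+1)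
          have : (0:ℝ) ≤ s * 2^s + 1 := by nlinarith
          positivity
        rw [Real.mul_rpow hc0 (by positivity)]
        exact mul_le_mul_of_nonneg_left (add_rpow_le_rpow_add hA0 hB0 hq1.le)
          (by positivity)
    _ = (1 / 2 ^ (1/p)) * ((s * 2^s + 1)/(2^s * (s+1) * (s+2))) ^ (1/q) * (h^2/2) * (A + B) := by
        rw [← trap_const_eq hs hpq hh0]
        ring
    _ = (1 / 2 ^ (1/p)) * ((s * 2^s + 1)/(2^s * (s+1) * (s+2))) ^ (1/q)
        * ((v - u)^2/2 * (A + B)) := by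
        rw [hh]
        ring

/-- Proposition 4: trapezoidal error estimate when `|f'|^q` is `s`-convex in the
second sense, `p > 1`, `q = p/(p-1)`. -/
theorem trapezoid_error_s_convex_holder (f f' : ℝ → ℝ) (a b s p q c d : ℝ) (n : ℕ)
    (x : ℕ → ℝ)
    (ha : 0 ≤ a) (hab : a < b) (hs : s ∈ Set.Ioc (0:ℝ) 1)
    (hp : 1 < p) (hq : q = p / (p - 1))
    (hc : c < a) (hd : b < d)
    (hdiff : ∀ y ∈ Set.Ioo c d, HasDerivAt f (f' y) y)
    (hint : IntervalIntegrable f' volume a b)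
    (hconv : ∀ y ∈ Set.Icc a b, ∀ z ∈ Set.Icc a b, ∀ t ∈ Set.Icc (0:ℝ) 1,
      |f' (t * y + (1 - t) * z)| ^ q ≤ t ^ s * |f' y| ^ q + (1 - t) ^ s * |f' z| ^ q)
    (hx0 : x 0 = a) (hxn : x n = b)
    (hxmono : ∀ k < n, x k < x (k + 1)) :
    |(∫ y in a..b, f y) -
        ∑ k ∈ Finset.range n, ((f (x k) + f (x (k + 1))) / 2) * (x (k + 1) - x k)| ≤
      (1 / 2 ^ (1 / p)) * ((s * 2 ^ s + 1) / (2 ^ s * (s + 1) * (s + 2))) ^ (1 / q) *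
        ∑ k ∈ Finset.range n,
          ((x (k + 1) - x k) ^ 2 / 2) * (|f' (x k)| + |f' (x (k + 1))|) := by
  have hpq : Real.HolderConjugate p q :=
    (Real.holderConjugate_iff_eq_conjExponent hp).mpr hq
  -- monotonicity of partition points
  have hmono : ∀ j, j ≤ n → ∀ i, i ≤ j → x i ≤ x j := by
    intro j
    induction j with
    | zero => intro _ i hi; rw [Nat.le_zero.mp hi]
    | succ j ih =>
      intro hj i hi
      by_cases hij : i = j + 1
      · rw [hij]
      · have hij' : i ≤ j := Nat.lt_succ_iff.mp (lt_of_le_of_ne hi hij)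
        exact (ih (by omega) i hij').trans (hxmono j (by omega)).le
  have hxmem : ∀ k, k ≤ n → x k ∈ Set.Icc a b := by
    intro k hk
    constructor
    · rw [← hx0]; exact hmono k hk 0 (Nat.zero_le k)
    · rw [← hxn]; exact hmono n le_rfl k hk
  -- interval inclusion
  have hsub : ∀ k, k < n → Set.uIcc (x k) (x (k + 1)) ⊆ Set.uIcc a b := by
    intro k hk
    rw [Set.uIcc_of_le (hxmono k hk).le, Set.uIcc_of_le hab.le]
    exact Set.Icc_subset_Icc (hxmem k hk.le).1 (hxmem (k + 1) hk).2
  have hIccIoo : Set.Icc a b ⊆ Set.Ioo c d := fun t ht => ⟨by linarith [ht.1], by linarith [ht.2]⟩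
  -- integrability of f on each subinterval
  have hfint : ∀ k, k < n → IntervalIntegrable f volume (x k) (x (k + 1)) := by
    intro k hk
    apply ContinuousOn.intervalIntegrable
    intro t ht
    exact (hdiff t (hIccIoo ((Set.uIcc_of_le hab.le ▸ hsub k hk) ht))).continuousAt.continuousWithinAt
  have hsum : ∑ k ∈ Finset.range n, ∫ y in x k..x (k + 1), f y = ∫ y in a..b, f y := by
    rw [← hx0, ← hxn]
    exact intervalIntegral.sum_integral_adjacent_intervals hfint
  have hsplit : (∫ y in a..b, f y) -
      ∑ k ∈ Finset.range n, ((f (x k) + f (x (k + 1))) / 2) * (x (k + 1) - x k)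
      = ∑ k ∈ Finset.range n, ((∫ y in x k..x (k + 1), f y)
          - (f (x k) + f (x (k + 1))) / 2 * (x (k + 1) - x k)) := by
    rw [Finset.sum_sub_distrib, hsum]
  rw [hsplit]
  refine (Finset.abs_sum_le_sum_abs _ _).trans ?_
  rw [Finset.mul_sum]
  apply Finset.sum_le_sum
  intro k hk
  have hk' := Finset.mem_range.mp hk
  exact trap_interval f f' s p q (x k) (x (k + 1)) hs.1 hpq (hxmono k hk')
    (fun y hy => hdiff y (hIccIoo ((Set.uIcc_of_le hab.le ▸ hsub k hk') hy)))
    (hint.mono_set (hsub k hk'))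
    (fun t ht => hconv (x (k + 1)) (hxmem (k + 1) hk') (x k) (hxmem k hk'.le) t ht)
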